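/- Let (X, σ) be a minimal topological dynamical system on a compact metric space, and suppose there is a factor map π from (X, σ) onto a minimal rotation (G, +α) on a compact monothetic metrizable group G, such that some fibre of π is finite of cardinality c. Then the maximal equicontinuous factor of (X, σ) is a group rotation on a group Z that admits a continuous surjective homomorphism onto G with finite kernel of order at most c. -/

import Mathlib

open Set Function Topology TopologicalSpace


/-- A factor of the dynamical system `(X, σ)` which is a minimal rotation on a
compact metrizable monothetic abelian group. -/
structure GroupRotationFactor (X : Type) [TopologicalSpace X] (σ : X → X) where
  Z : Type
  [grp : AddCommGroup Z]
  [top : TopologicalSpace Z]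
  [tgrp : IsTopologicalAddGroup Z]
  [cpt : CompactSpace Z]
  [t2 : T2Space Z]
  [met : TopologicalSpace.MetrizableSpace Z]
  β : Z
  dense_gen : Dense (Set.range fun n : ℤ => n • β)
  factor : X → Z
  cont : Continuous factor
  surj : Function.Surjective factor
  equivar : ∀ x, factor (σ x) = factor x + β

attribute [instance] GroupRotationFactor.grp GroupRotationFactor.top
  GroupRotationFactor.tgrp GroupRotationFactor.cpt GroupRotationFactor.t2
  GroupRotationFactor.met

/-- Continuous surjective image of a compact second-countable space in a T2 space is
second countable. -/
theorem secondCountable_of_compact_surj {X Y : Type*} [TopologicalSpace X] [TopologicalSpace Y]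
    [CompactSpace X] [SecondCountableTopology X] [T2Space Y]
    {f : X → Y} (hc : Continuous f) (hs : Function.Surjective f) :
    SecondCountableTopology Y := by
  obtain ⟨b, hbc, -, hbb⟩ := exists_countable_basis X
  have hclosed : IsClosedMap f := hc.isClosedMap
  refine
    (TopologicalSpace.isTopologicalBasis_of_isOpen_of_nhds (s :=
        (fun t : Set (Set X) => (f '' (⋃₀ t)ᶜ)ᶜ) '' {t | t.Finite ∧ t ⊆ b}) ?_
        ?_).secondCountableTopology
      ((countable_setOf_finite_subset hbc).image _)
  · rintro - ⟨t, ⟨htf, htb⟩, rfl⟩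
    exact (hclosed _ (isOpen_sUnion fun u hu => hbb.isOpen (htb hu)).isClosed_compl).isOpen_compl
  · intro y W hyW hW
    have hK : IsCompact (f ⁻¹' {y}) := (isClosed_singleton.preimage hc).isCompact
    have hKO : f ⁻¹' {y} ⊆ f ⁻¹' W := fun x hx => by
      simp only [mem_preimage, mem_singleton_iff] at hx; simp [mem_preimage, hx, hyW]
    have hO : IsOpen (f ⁻¹' W) := hW.preimage hc
    have hcov : f ⁻¹' {y} ⊆ ⋃ u ∈ {u | u ∈ b ∧ u ⊆ f ⁻¹' W}, u := by
      intro x hx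
      obtain ⟨v, hvb, hxv, hvO⟩ := hbb.exists_subset_of_mem_open (hKO hx) hO
      exact mem_biUnion ⟨hvb, hvO⟩ hxv
    obtain ⟨t, htb', htf, hcov'⟩ :=
      hK.elim_finite_subcover_image (fun u hu => hbb.isOpen hu.1) hcov
    refine ⟨(f '' (⋃₀ t)ᶜ)ᶜ, ⟨t, ⟨htf, fun u hu => (htb' hu).1⟩, rfl⟩, ?_, ?_⟩
    · intro hy
      obtain ⟨x, hx, hfx⟩ := hy
      refine hx ?_
      rw [Set.sUnion_eq_biUnion]
      exact hcov' (by simp [mem_preimage, hfx])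
    · intro y' hy'
      obtain ⟨x, rfl⟩ := hs y'
      have hxt : x ∈ ⋃₀ t := by
        by_contra hxt
        exact hy' ⟨x, hxt, rfl⟩
      obtain ⟨u, hut, hxu⟩ := hxt
      exact (htb' hut).2 hxu

section SmallRot

variable {X : Type} [TopologicalSpace X]

/-- A "small" presentation of a group rotation factor of `(X, σ)`: a setoid on `X` whose
quotient carries a compatible topological abelian group structure in which `σ` acts as
translation by the class of `σ x0` minus the class of `x0`. -/
structure SmallRot (σ : X → X) (x0 : X) where
  s : Setoid X
  [grp : AddCommGroup (Quotient s)]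
  t2 : T2Space (Quotient s)
  tgrp : IsTopologicalAddGroup (Quotient s)
  equivar : ∀ x : X, Quotient.mk s (σ x) =
    Quotient.mk s x + (Quotient.mk s (σ x0) - Quotient.mk s x0)

attribute [instance] SmallRot.grp

variable {σ : X → X} {x0 : X}

instance (i : SmallRot σ x0) : T2Space (Quotient i.s) := i.t2
instance (i : SmallRot σ x0) : IsTopologicalAddGroup (Quotient i.s) := i.tgrp
instance [CompactSpace X] (i : SmallRot σ x0) : CompactSpace (Quotient i.s) :=
  Quotient.compactSpace

/-- Every group-rotation factor admits a small presentation together with a continuous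
additive identification with its quotient. -/
theorem exists_smallRot [CompactSpace X] (σ : X → X) (x0 : X) (F : GroupRotationFactor X σ) :
    ∃ (i : SmallRot σ x0) (e : Quotient i.s → F.Z), Continuous e ∧
      (∀ x, e (Quotient.mk i.s x) = F.factor x) ∧ (∀ a b, e (a + b) = e a + e b) := by
  classical
  set s : Setoid X :=
    ⟨fun a b => F.factor a = F.factor b, ⟨fun _ => rfl, fun h => h.symm, fun h h' => h.trans h'⟩⟩
    with hs
  let l : Quotient s → F.Z := Quotient.lift F.factor fun _ _ h => h
  have hl : ∀ x, l (Quotient.mk s x) = F.factor x := fun _ => rfl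
  have hinj : Function.Injective l := by
    rintro ⟨a⟩ ⟨b⟩ h
    exact Quotient.sound h
  have hsurjl : Function.Surjective l := fun z => by
    obtain ⟨x, hx⟩ := F.surj z
    exact ⟨Quotient.mk s x, hx⟩
  let e : Quotient s ≃ F.Z := Equiv.ofBijective l ⟨hinj, hsurjl⟩
  have hcl : Continuous l := continuous_quot_lift _ F.cont
  have hce : Continuous e := hcl
  let h : Quotient s ≃ₜ F.Z := Continuous.homeoOfEquivCompactToT2 (f := e) hce
  haveI ht2 : T2Space (Quotient s) := h.isEmbedding.t2Space
  letI grp : AddCommGroup (Quotient s) := e.addCommGroup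
  have hadd : ∀ a b : Quotient s, e (a + b) = e a + e b := fun a b =>
    e.apply_symm_apply _
  have hneg : ∀ a : Quotient s, e (-a) = -(e a) := fun a => e.apply_symm_apply _
  have hsub : ∀ a b : Quotient s, e (a - b) = e a - e b := fun a b => by
    rw [sub_eq_add_neg, hadd, hneg, sub_eq_add_neg]
  have hesymm : Continuous (⇑e.symm) := h.symm.continuous
  have hca : Continuous fun p : Quotient s × Quotient s => p.1 + p.2 := by
    have : (fun p : Quotient s × Quotient s => p.1 + p.2) =
        fun p => e.symm (e p.1 + e p.2) := rfl
    rw [this]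
    exact hesymm.comp ((hce.comp continuous_fst).add (hce.comp continuous_snd))
  have hcn : Continuous fun a : Quotient s => -a := by
    have : (fun a : Quotient s => -a) = fun a => e.symm (-(e a)) := rfl
    rw [this]
    exact hesymm.comp (hce.neg)
  haveI tg : IsTopologicalAddGroup (Quotient s) :=
    { continuous_add := hca, continuous_neg := hcn }
  have heq : ∀ x : X, Quotient.mk s (σ x) =
      Quotient.mk s x + (Quotient.mk s (σ x0) - Quotient.mk s x0) := by
    intro x
    apply e.injective
    rw [hadd, hsub]
    show F.factor (σ x) = F.factor x + (F.factor (σ x0) - F.factor x0)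
    rw [F.equivar, F.equivar x0, add_sub_cancel_left]
  exact ⟨⟨s, ht2, tg, heq⟩, e, hce, hl, hadd⟩

end SmallRot

/-- If a minimal system `(X, σ)` is a somewhere finite-to-one
extension (with a fibre of cardinality `c`) of a minimal rotation on a compact
monothetic metrizable group `G`, then its maximal equicontinuous factor is a
group rotation on a group `Z` admitting a continuous surjective homomorphism
onto `G` with finite kernel of order at most `c`. -/
theorem stmt_7 {X : Type} [MetricSpace X] [CompactSpace X] (σ : X ≃ₜ X)
    (hmin : ∀ x : X, Dense (Set.range fun n : ℤ => (σ.toEquiv ^ n) x))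
    {G : Type} [AddCommGroup G] [TopologicalSpace G] [IsTopologicalAddGroup G]
    [CompactSpace G] [T2Space G] [TopologicalSpace.MetrizableSpace G]
    (α : G) (hα : Dense (Set.range fun n : ℤ => n • α))
    (π : X → G) (hcont : Continuous π) (hsurj : Function.Surjective π)
    (hequi : ∀ x, π (σ x) = π x + α)
    (c : ℕ) (hc : 0 < c) (g : G)
    (hfin : (π ⁻¹' {g}).Finite) (hcard : Nat.card (π ⁻¹' {g}) = c) :
    ∃ M : GroupRotationFactor X ⇑σ,
      (∀ F : GroupRotationFactor X ⇑σ,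
        ∃ ψ : M.Z → F.Z, Continuous ψ ∧ ∀ x, ψ (M.factor x) = F.factor x) ∧
      ∃ φ : M.Z →+ G, Continuous φ ∧ Function.Surjective φ ∧
        (φ.ker : Set M.Z).Finite ∧ Nat.card φ.ker ≤ c := by
  classical
  obtain ⟨x0, hx0⟩ := hsurj g
  -- the big product of all small group rotation factors
  let P : Type := ∀ i : SmallRot (⇑σ) x0, Quotient i.s
  let Φ : X → P := fun x i => Quotient.mk i.s x
  have hΦc : Continuous Φ := continuous_pi fun i => continuous_quotient_mk'
  let B : P := fun i => Quotient.mk i.s (σ x0) - Quotient.mk i.s x0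
  have hΦσ : ∀ x, Φ (σ x) = Φ x + B := fun x => funext fun i => i.equivar x
  let T : X → P := fun x => Φ x - Φ x0
  have hTc : Continuous T := hΦc.sub continuous_const
  have hTσ : ∀ x, T (σ x) = T x + B := by
    intro x
    show Φ (σ x) - Φ x0 = (Φ x - Φ x0) + B
    rw [hΦσ]; abel
  have hΦpow : ∀ n : ℤ, Φ ((σ.toEquiv ^ n) x0) = Φ x0 + n • B := by
    intro n
    induction n using Int.induction_on with
    | zero => simp
    | succ n ih =>
      have hstep : (σ.toEquiv ^ ((n : ℤ) + 1)) x0 = σ ((σ.toEquiv ^ (n : ℤ)) x0) := by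
        rw [add_comm ((n : ℤ)) 1, zpow_one_add]
        rfl
      rw [hstep, hΦσ, ih, add_zsmul, one_zsmul, add_assoc]
    | pred n ih =>
      have hstep : Φ ((σ.toEquiv ^ (-(n : ℤ))) x0) = Φ ((σ.toEquiv ^ (-(n : ℤ) - 1)) x0) + B := by
        rw [← hΦσ]
        congr 1
        have : (σ.toEquiv ^ (-(n : ℤ))) = σ.toEquiv ^ (1 + (-(n : ℤ) - 1)) := by ring_nf
        rw [this, zpow_one_add]
        rfl
      have h2 : Φ ((σ.toEquiv ^ (-(n : ℤ) - 1)) x0) = Φ x0 + (-(n : ℤ)) • B - B :=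
        eq_sub_of_add_eq (by rw [← hstep, ih])
      rw [h2, sub_zsmul, one_zsmul]
      abel
  have hTpow : ∀ n : ℤ, T ((σ.toEquiv ^ n) x0) = n • B := by
    intro n
    show Φ ((σ.toEquiv ^ n) x0) - Φ x0 = n • B
    rw [hΦpow, add_sub_cancel_left]
  -- the subgroup
  let H : AddSubgroup P := (AddSubgroup.zmultiples B).topologicalClosure
  have hHcoe : (H : Set P) = closure ((AddSubgroup.zmultiples B : AddSubgroup P) : Set P) := rfl
  have hHclosed : IsClosed (H : Set P) := AddSubgroup.isClosed_topologicalClosure _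
  haveI : CompactSpace H := isCompact_iff_compactSpace.mp hHclosed.isCompact
  have hzran : ((AddSubgroup.zmultiples B : AddSubgroup P) : Set P)
      = Set.range (fun n : ℤ => n • B) := by
    ext z; simp [AddSubgroup.mem_zmultiples_iff]
  have hmemH : ∀ x, T x ∈ H := by
    intro x
    have hx : x ∈ closure (Set.range fun n : ℤ => (σ.toEquiv ^ n) x0) := by
      rw [(hmin x0).closure_eq]; trivial
    have h1 : T x ∈ closure (T '' (Set.range fun n : ℤ => (σ.toEquiv ^ n) x0)) :=
      (image_closure_subset_closure_image hTc) (Set.mem_image_of_mem _ hx)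
    have h2 : T '' (Set.range fun n : ℤ => (σ.toEquiv ^ n) x0)
        ⊆ ((AddSubgroup.zmultiples B : AddSubgroup P) : Set P) := by
      rintro - ⟨-, ⟨n, rfl⟩, rfl⟩
      rw [hzran, hTpow]
      exact ⟨n, rfl⟩
    show T x ∈ (H : Set P)
    rw [hHcoe]
    exact closure_mono h2 h1
  let βH : H := ⟨B, AddSubgroup.le_topologicalClosure _ (AddSubgroup.mem_zmultiples B)⟩
  have hβHsmul : ∀ n : ℤ, ((n • βH : H) : P) = n • B := fun n => rfl
  let fac : X → H := fun x => ⟨T x, hmemH x⟩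
  have hfacc : Continuous fac := hTc.subtype_mk _
  have hfaceq : ∀ x, fac (σ x) = fac x + βH := fun x => Subtype.ext (hTσ x)
  have hfacpow : ∀ n : ℤ, fac ((σ.toEquiv ^ n) x0) = n • βH := fun n =>
    Subtype.ext (by rw [hβHsmul]; exact hTpow n)
  have hdense : Dense (Set.range fun n : ℤ => n • βH) := by
    rw [IsInducing.subtypeVal.dense_iff]
    intro z
    have h3 : (↑z : P) ∈ closure (Set.range fun n : ℤ => n • B) := by
      rw [← hzran, ← hHcoe]
      exact z.2
    refine closure_mono ?_ h3
    rintro - ⟨n, rfl⟩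
    exact ⟨n • βH, ⟨n, rfl⟩, rfl⟩
  have hfacsurj : Function.Surjective fac := by
    rw [← Set.range_eq_univ]
    have hransub : (Set.range fun n : ℤ => n • βH) ⊆ Set.range fac := by
      rintro - ⟨n, rfl⟩
      exact ⟨(σ.toEquiv ^ n) x0, hfacpow n⟩
    have hcl : IsClosed (Set.range fac) := (isCompact_range hfacc).isClosed
    have := (hdense.mono hransub)
    rw [← hcl.closure_eq]
    exact this.closure_eq
  haveI : SecondCountableTopology H := secondCountable_of_compact_surj hfacc hfacsurj
  haveI : TopologicalSpace.MetrizableSpace H := inferInstance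
  refine ⟨{ Z := H, β := βH, dense_gen := hdense, factor := fac, cont := hfacc,
            surj := hfacsurj, equivar := hfaceq }, ?_, ?_⟩
  · -- universal property
    intro F
    obtain ⟨i, e, hec, hemk, -⟩ := exists_smallRot (⇑σ) x0 F
    refine ⟨fun z => e ((z : P) i + Quotient.mk i.s x0), ?_, ?_⟩
    · exact hec.comp (((continuous_apply i).comp continuous_subtype_val).add continuous_const)
    · intro x
      show e ((T x) i + Quotient.mk i.s x0) = F.factor x
      have h1 : (T x) i = Quotient.mk i.s x - Quotient.mk i.s x0 := rfl
      rw [h1, sub_add_cancel, hemk]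
  · -- the homomorphism to G
    let FG : GroupRotationFactor X ⇑σ :=
      { Z := G, β := α, dense_gen := hα, factor := π, cont := hcont,
        surj := hsurj, equivar := hequi }
    obtain ⟨iG, eG, heGc, heGmk, heGadd⟩ := exists_smallRot (⇑σ) x0 FG
    let eGhom : Quotient iG.s →+ G := AddMonoidHom.mk' eG heGadd
    let φ : H →+ G := eGhom.comp ((Pi.evalAddMonoidHom _ iG).comp H.subtype)
    have hφ : ∀ z : H, φ z = eG ((z : P) iG) := fun z => rfl
    have hφfac : ∀ x, φ (fac x) = π x - g := by
      intro x
      rw [hφ]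
      have h1 : ((fac x : H) : P) iG = Quotient.mk iG.s x - Quotient.mk iG.s x0 := rfl
      rw [h1]
      have h2 : eG (Quotient.mk iG.s x - Quotient.mk iG.s x0)
          = eG (Quotient.mk iG.s x) - eG (Quotient.mk iG.s x0) :=
        map_sub eGhom _ _
      rw [h2, heGmk, heGmk]
      show π x - π x0 = π x - g
      rw [hx0]
    have hφc : Continuous φ := heGc.comp ((continuous_apply iG).comp continuous_subtype_val)
    have hφsurj : Function.Surjective φ := by
      intro y
      obtain ⟨x, hx⟩ := hsurj (y + g)
      exact ⟨fac x, by rw [hφfac, hx, add_sub_cancel_right]⟩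
    have hker : (φ.ker : Set H) = fac '' (π ⁻¹' {g}) := by
      ext z
      constructor
      · intro hz
        obtain ⟨x, rfl⟩ := hfacsurj z
        rw [SetLike.mem_coe, AddMonoidHom.mem_ker, hφfac, sub_eq_zero] at hz
        exact ⟨x, hz, rfl⟩
      · rintro ⟨x, hx, rfl⟩
        rw [Set.mem_preimage, Set.mem_singleton_iff] at hx
        rw [SetLike.mem_coe, AddMonoidHom.mem_ker, hφfac, hx, sub_self]
    haveI : Finite (π ⁻¹' {g}) := hfin.to_subtype
    have hmsurj : Function.Surjective
        (fun x : (π ⁻¹' {g} : Set X) => (⟨fac x, by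
          rw [AddMonoidHom.mem_ker, hφfac, (Set.mem_singleton_iff.mp x.2), sub_self]⟩
            : φ.ker)) := by
      rintro ⟨z, hz⟩
      rw [AddMonoidHom.mem_ker] at hz
      obtain ⟨x, rfl⟩ := hfacsurj z
      rw [hφfac, sub_eq_zero] at hz
      exact ⟨⟨x, hz⟩, rfl⟩
    refine ⟨φ, hφc, hφsurj, ?_, ?_⟩
    · rw [hker]; exact hfin.image _
    · calc Nat.card φ.ker ≤ Nat.card (π ⁻¹' {g}) := Nat.card_le_card_of_surjective _ hmsurj
        _ = c := hcard
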